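/- Let G be a finite simple graph on vertex set {1,…,n}, and let u, v be packed words of length n such that u refines v (the set composition encoded by v is obtained by merging adjacent blocks of the one encoded by u). Then asc_G(u) = asc_G(v) + Σ_{i=1}^{max(v)} asc_{G_i(v)}(u restricted to v^{-1}(i)), where asc_G(w) is the number of edges (i,j) of G with i<j and w_i < w_j, and G_i(v) is the induced subgraph of G on the vertices colored i by v. -/

import Mathlib

/-- Number of ascents of a coloring `w` of a graph `G` on `{0,…,n-1}`:
edges `(i,j)` with `i < j` and `w i < w j`. -/
def ascG {n : ℕ} (G : SimpleGraph (Fin n)) [DecidableRel G.Adj] (w : Fin n → ℕ) : ℕ :=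
  (Finset.univ.filter
    (fun p : Fin n × Fin n => p.1 < p.2 ∧ G.Adj p.1 p.2 ∧ w p.1 < w p.2)).card

/-- Number of ascents of `u` on the induced subgraph `G_c(v)` of `G` on the vertices
colored `c` by `v` (the packed restriction of `u` has the same ascents). -/
def ascWithin {n : ℕ} (G : SimpleGraph (Fin n)) [DecidableRel G.Adj] (v : Fin n → ℕ)
    (c : ℕ) (u : Fin n → ℕ) : ℕ :=
  (Finset.univ.filter (fun p : Fin n × Fin n =>
    p.1 < p.2 ∧ G.Adj p.1 p.2 ∧ v p.1 = c ∧ v p.2 = c ∧ u p.1 < u p.2)).card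

/-- `w` is a packed word with letters exactly `1,…,r`. -/
def PackedWord {n : ℕ} (w : Fin n → ℕ) (r : ℕ) : Prop :=
  (∀ i, w i ∈ Finset.Icc 1 r) ∧ ∀ k ∈ Finset.Icc 1 r, ∃ i, w i = k

/-- Lemma 1 of the paper: if the packed word `u` refines `v` (i.e. `v` is obtained
from `u` by merging adjacent blocks, equivalently `v = f ∘ u` for a monotone `f`), then
`asc_G(u) = asc_G(v) + Σ_{c=1}^{max v} asc_{G_c(v)}(u|_{v⁻¹(c)})`. -/
theorem stmt0 {n : ℕ} (G : SimpleGraph (Fin n)) [DecidableRel G.Adj]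
    (u v : Fin n → ℕ) (r s : ℕ) (hu : PackedWord u s) (hv : PackedWord v r)
    (href : ∃ f : ℕ → ℕ, Monotone f ∧ ∀ i, v i = f (u i)) :
    ascG G u = ascG G v + ∑ c ∈ Finset.Icc 1 r, ascWithin G v c u := by
  classical
  obtain ⟨f, hf, hvf⟩ := href
  simp only [ascG, ascWithin, Finset.card_filter]
  rw [Finset.sum_comm, ← Finset.sum_add_distrib]
  refine Finset.sum_congr rfl fun p _ => ?_
  by_cases hlt : p.1 < p.2
  · by_cases hadj : G.Adj p.1 p.2
    · simp only [hlt, hadj, true_and]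
      by_cases hule : u p.1 < u p.2
      · have hvle : v p.1 ≤ v p.2 := by rw [hvf, hvf]; exact hf hule.le
        rcases lt_or_eq_of_le hvle with hvlt | hveq
        · have : ∀ c ∈ Finset.Icc 1 r,
              (if v p.1 = c ∧ v p.2 = c ∧ u p.1 < u p.2 then 1 else 0) = 0 := by
            intro c _
            simp only [ite_eq_right_iff]
            rintro ⟨h1, h2, _⟩
            exact absurd (h1.trans h2.symm) hvlt.ne
          rw [Finset.sum_congr rfl this]
          simp [hvlt, hule]
        · have hmem := hv.1 p.1
          rw [Finset.sum_eq_single (v p.1)]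
          · simp [hveq, hule]
          · intro c _ hc
            simp only [ite_eq_right_iff]
            rintro ⟨h1, _, _⟩
            exact absurd h1.symm hc
          · intro h; exact absurd hmem h
      · have hnvlt : ¬ v p.1 < v p.2 := by
          rw [hvf, hvf]
          intro h
          exact hule (lt_of_not_ge fun hle => absurd (hf hle) (not_le.2 h))
        have : ∀ c ∈ Finset.Icc 1 r,
            (if v p.1 = c ∧ v p.2 = c ∧ u p.1 < u p.2 then 1 else 0) = 0 := by
          intro c _
          simp only [ite_eq_right_iff]
          rintro ⟨_, _, h⟩
          exact absurd h hule
        rw [Finset.sum_congr rfl this]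
        simp [hule, hnvlt]
    · simp [hadj]
  · simp [hlt]
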